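/- If K₁ and K₂ are both delay-insensitive and controllable sublanguages of M_G, then K₁ ∪ K₂ is delay-insensitive and controllable; hence the class CD(L) of controllable and delay-insensitive sublanguages of any language L is closed under (finite and arbitrary) union, and the supremal element sup CD(L) exists. -/
import Mathlib


/-- The prefix-closure of a language. -/
def prefixClosure {α : Type*} (K : Set (List α)) : Set (List α) :=
  {t | ∃ w ∈ K, t <+: w}

/-- Delay closure swapping adjacent `σ' σ` (`σ' ∈ Sc`, `σ ∈ Su`) into `σ σ'`. -/
inductive Delay {α : Type*} (Sc Su : Set α) (L : Set (List α)) : List α → Prop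
  | base {w : List α} : w ∈ L → Delay Sc Su L w
  | swap {s t : List α} {σ' σ : α} :
      Delay Sc Su L (s ++ σ' :: σ :: t) → σ' ∈ Sc → σ ∈ Su →
      Delay Sc Su L (s ++ σ :: σ' :: t)

/-- `K` is controllable w.r.t. plant `MG`: `K̄ Σ_u ∩ M_G ⊆ K̄`. -/
def Controllable {α : Type*} (MG : Set (List α)) (Su : Set α) (K : Set (List α)) : Prop :=
  ∀ s ∈ prefixClosure K, ∀ σ ∈ Su, s ++ [σ] ∈ MG → s ++ [σ] ∈ prefixClosure K

/-- `K` is delay-insensitive: `delay[Σ_c](K̄) ∩ M_G ⊆ K̄`. -/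
def DelayInsensitive {α : Type*} (MG : Set (List α)) (Sc Su : Set α)
    (K : Set (List α)) : Prop :=
  ∀ w : List α, Delay Sc Su (prefixClosure K) w → w ∈ MG → w ∈ prefixClosure K

/-- `CD(L)`: controllable and delay-insensitive sublanguages of `L`. -/
def CD {α : Type*} (MG : Set (List α)) (Sc Su : Set α) (L : Set (List α)) :
    Set (Set (List α)) :=
  {K | K ⊆ L ∧ Controllable MG Su K ∧ DelayInsensitive MG Sc Su K}

lemma prefixClosure_iUnion {α : Type*} {ι : Sort*} (K : ι → Set (List α)) :
    prefixClosure (⋃ i, K i) = ⋃ i, prefixClosure (K i) := by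
  ext t
  simp only [prefixClosure, Set.mem_iUnion, Set.mem_setOf_eq]
  constructor
  · rintro ⟨w, ⟨i, hi⟩, hp⟩; exact ⟨i, w, hi, hp⟩
  · rintro ⟨i, w, hi, hp⟩; exact ⟨w, ⟨i, hi⟩, hp⟩

lemma Delay_iUnion {α : Type*} {Sc Su : Set α} {ι : Sort*} {A : ι → Set (List α)}
    {w : List α} (h : Delay Sc Su (⋃ i, A i) w) : ∃ i, Delay Sc Su (A i) w := by
  induction h with
  | base hw => obtain ⟨i, hi⟩ := Set.mem_iUnion.mp hw; exact ⟨i, .base hi⟩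
  | swap _ hc hu ih => obtain ⟨i, hi⟩ := ih; exact ⟨i, .swap hi hc hu⟩

lemma Controllable_iUnion {α : Type*} {MG : Set (List α)} {Su : Set α}
    {ι : Sort*} {K : ι → Set (List α)} (h : ∀ i, Controllable MG Su (K i)) :
    Controllable MG Su (⋃ i, K i) := by
  intro s hs σ hσ hmg
  rw [prefixClosure_iUnion] at hs ⊢
  obtain ⟨i, hi⟩ := Set.mem_iUnion.mp hs
  exact Set.mem_iUnion.mpr ⟨i, h i s hi σ hσ hmg⟩

lemma DelayInsensitive_iUnion {α : Type*} {MG : Set (List α)} {Sc Su : Set α}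
    {ι : Sort*} {K : ι → Set (List α)} (h : ∀ i, DelayInsensitive MG Sc Su (K i)) :
    DelayInsensitive MG Sc Su (⋃ i, K i) := by
  intro w hw hmg
  rw [prefixClosure_iUnion] at hw ⊢
  obtain ⟨i, hi⟩ := Delay_iUnion hw
  exact Set.mem_iUnion.mpr ⟨i, h i w hi hmg⟩

/-- Controllable delay-insensitive sublanguages are closed under binary and
arbitrary unions, and the supremal element `sup CD(L)` exists. -/
theorem CD_closed_under_union_and_supremal {α : Type*} (MG : Set (List α))
    (Sc Su : Set α) (hMGpc : ∀ s ∈ MG, ∀ t : List α, t <+: s → t ∈ MG) :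
    (∀ K₁ K₂ : Set (List α), K₁ ⊆ MG → K₂ ⊆ MG →
      Controllable MG Su K₁ → DelayInsensitive MG Sc Su K₁ →
      Controllable MG Su K₂ → DelayInsensitive MG Sc Su K₂ →
      Controllable MG Su (K₁ ∪ K₂) ∧ DelayInsensitive MG Sc Su (K₁ ∪ K₂)) ∧
    (∀ (L : Set (List α)) (ι : Type) (K : ι → Set (List α)),
      (∀ i, K i ∈ CD MG Sc Su L) → (⋃ i, K i) ∈ CD MG Sc Su L) ∧
    (∀ L : Set (List α), ∃ S ∈ CD MG Sc Su L, ∀ K ∈ CD MG Sc Su L, K ⊆ S) := by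
  refine ⟨?_, ?_, ?_⟩
  · intro K₁ K₂ _ _ hc1 hd1 hc2 hd2
    rw [Set.union_eq_iUnion]
    exact ⟨Controllable_iUnion (fun b => by cases b <;> assumption),
      DelayInsensitive_iUnion (fun b => by cases b <;> assumption)⟩
  · intro L ι K hK
    exact ⟨Set.iUnion_subset fun i => (hK i).1,
      Controllable_iUnion fun i => (hK i).2.1,
      DelayInsensitive_iUnion fun i => (hK i).2.2⟩
  · intro L
    refine ⟨⋃₀ CD MG Sc Su L, ?_, fun K hK => Set.subset_sUnion_of_mem hK⟩
    rw [Set.sUnion_eq_iUnion]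
    exact ⟨Set.iUnion_subset fun K => K.2.1,
      Controllable_iUnion fun K => K.2.2.1,
      DelayInsensitive_iUnion fun K => K.2.2.2⟩
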